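/- For every (x,t) ∈ ℝ^d × ℝ, the difference of posterior means satisfies μ_D(x,t) − μ_D̃(x,t) = a·k((x,t),(x₁,t₁)) + Σ_{j=2}^{n} b_j·k((x,t),(x_j,t_j)), where a = E·y₁ + G·ỹ ∈ ℝ and b ∈ ℝ^{n−1} is defined by bᵀ = y₁·Hᵀ + ỹᵀ(F − Δ̃⁻¹). -/

import Mathlib

open Matrix

section aux

variable {n : ℕ}

lemma vvmv (u v z : Fin n → ℝ) : vecMulVec u v *ᵥ z = (v ⬝ᵥ z) • u := by
  funext i
  simp [Matrix.mulVec, dotProduct, vecMulVec_apply, Finset.mul_sum, mul_assoc,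
    mul_comm, mul_left_comm]

end aux

/-- Proposition 1 of the paper: the difference of posterior means after removing the first
observation is `a·k((x,t),(x₁,t₁)) + Σⱼ bⱼ·k((x,t),(xⱼ,tⱼ))`. -/
theorem stmt_2
    (d n : ℕ) (hd : 1 ≤ d) (hn : 1 ≤ n)
    (lam sig : ℝ) (hlam : 0 < lam) (hsig : 0 < sig)
    (kS kT : ℝ → ℝ)
    (hkSmeas : Measurable kS) (hkTmeas : Measurable kT)
    (hkSrange : ∀ r, kS r ∈ Set.Icc (0 : ℝ) 1) (hkTrange : ∀ r, kT r ∈ Set.Icc (0 : ℝ) 1)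
    (hkS0 : kS 0 = 1) (hkT0 : kT 0 = 1)
    (k : (EuclideanSpace ℝ (Fin d) × ℝ) → (EuclideanSpace ℝ (Fin d) × ℝ) → ℝ)
    (hk : ∀ p q, k p q = lam * kS (‖p.1 - q.1‖) * kT (|p.2 - q.2|))
    (pts : Fin (n + 1) → EuclideanSpace ℝ (Fin d) × ℝ)
    (y : Fin (n + 1) → ℝ)
    (Δ : Matrix (Fin (n + 1)) (Fin (n + 1)) ℝ)
    (hΔ : ∀ i j, Δ i j = k (pts i) (pts j) + sig ^ 2 * (if i = j then 1 else 0))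
    (hPD : Δ.PosDef)
    (Δt : Matrix (Fin n) (Fin n) ℝ)
    (hΔt : Δt = Δ.submatrix Fin.succ Fin.succ)
    (k1 : Fin n → ℝ)
    (hk1 : ∀ j : Fin n, k1 j = k (pts 0) (pts j.succ))
    (E : ℝ) (hE : E = (lam + sig ^ 2 - k1 ⬝ᵥ Δt⁻¹ *ᵥ k1)⁻¹)
    (F : Matrix (Fin n) (Fin n) ℝ)
    (hF : F = (Δt - (lam + sig ^ 2)⁻¹ • vecMulVec k1 k1)⁻¹)
    (G : Fin n → ℝ) (hG : G = -(E • (k1 ᵥ* Δt⁻¹)))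
    (H : Fin n → ℝ) (hH : H = -((lam + sig ^ 2)⁻¹ • (F *ᵥ k1)))
    (μD μDt : (EuclideanSpace ℝ (Fin d) × ℝ) → ℝ)
    (hμD : ∀ p, μD p = (fun i : Fin (n + 1) => k p (pts i)) ⬝ᵥ Δ⁻¹ *ᵥ y)
    (hμDt : ∀ p, μDt p =
      (fun j : Fin n => k p (pts j.succ)) ⬝ᵥ Δt⁻¹ *ᵥ (fun j : Fin n => y j.succ))
    (a : ℝ) (ha : a = E * y 0 + G ⬝ᵥ (fun j : Fin n => y j.succ))
    (b : Fin n → ℝ)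
    (hb : b = y 0 • H + (fun j : Fin n => y j.succ) ᵥ* (F - Δt⁻¹)) :
    ∀ p : EuclideanSpace ℝ (Fin d) × ℝ,
      μD p - μDt p = a * k p (pts 0) + ∑ j : Fin n, b j * k p (pts j.succ) := by
  intro p
  set A : ℝ := lam + sig ^ 2 with hA
  have hApos : (0:ℝ) < A := by positivity
  have hAne : A ≠ 0 := ne_of_gt hApos
  have hAA : A * A⁻¹ = 1 := mul_inv_cancel₀ hAne
  -- symmetry of the kernel
  have hksymm : ∀ p q, k p q = k q p := by
    intro p q; rw [hk, hk, norm_sub_rev, abs_sub_comm]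
  have hkself : ∀ q, k q q = lam := by
    intro q; rw [hk]; simp [hkS0, hkT0]
  -- entries of Δ
  have hΔ00 : Δ 0 0 = A := by rw [hΔ]; simp [hkself, hA]
  have hΔ0s : ∀ j : Fin n, Δ 0 j.succ = k1 j := by
    intro j; rw [hΔ, hk1]; simp [(Fin.succ_ne_zero j).symm]
  have hΔs0 : ∀ j : Fin n, Δ j.succ 0 = k1 j := by
    intro j; rw [hΔ, hk1, hksymm]; simp [Fin.succ_ne_zero j]
  have hΔss : ∀ i j : Fin n, Δ i.succ j.succ = Δt i j := by
    intro i j; rw [hΔt]; rfl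
  -- symmetry facts
  have hΔtsy : ∀ i j, Δt i j = Δt j i := by
    intro i j
    rw [hΔt]; simp only [submatrix_apply, hΔ]
    rw [hksymm]
    by_cases h : i = j
    · subst h; ring
    · rw [if_neg (fun hc => h (Fin.succ_injective _ hc)),
        if_neg (fun hc => h (Fin.succ_injective _ hc).symm)]
  have hΔtT : Δtᵀ = Δt := by
    ext i j; exact hΔtsy j i
  have hΔtH : Δt.IsHermitian := by
    unfold Matrix.IsHermitian
    ext i j
    simp [conjTranspose_apply, hΔtsy j i]
  -- mulVec of Δ on a cons vector
  have hmv : ∀ (c : ℝ) (z : Fin n → ℝ),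
      Δ *ᵥ (Fin.cons c z : Fin (n+1) → ℝ) =
        Fin.cons (A * c + k1 ⬝ᵥ z) (fun j => c * k1 j + (Δt *ᵥ z) j) := by
    intro c z
    funext i
    refine Fin.cases ?_ ?_ i
    · simp [Matrix.mulVec, dotProduct, Fin.sum_univ_succ, hΔ00, hΔ0s]
    · intro j
      simp [Matrix.mulVec, dotProduct, Fin.sum_univ_succ, hΔs0, hΔss, mul_comm]
  -- the quadratic form of Δ on vectors `Fin.cons c z`
  have hquad : ∀ (c : ℝ) (z : Fin n → ℝ),
      (Fin.cons c z : Fin (n+1) → ℝ) ⬝ᵥ Δ *ᵥ (Fin.cons c z) =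
        A * c ^ 2 + 2 * c * (k1 ⬝ᵥ z) + z ⬝ᵥ (Δt *ᵥ z) := by
    intro c z
    rw [hmv]
    simp only [dotProduct, Fin.sum_univ_succ, Fin.cons_zero, Fin.cons_succ, mul_add,
      Finset.sum_add_distrib]
    have e1 : ∑ j, z j * (c * k1 j) = c * ∑ j, k1 j * z j := by
      rw [Finset.mul_sum]
      exact Finset.sum_congr rfl fun j _ => by ring
    rw [e1]
    ring
  have hconsne : ∀ (c : ℝ) (z : Fin n → ℝ), z ≠ 0 → (Fin.cons c z : Fin (n+1) → ℝ) ≠ 0 := by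
    intro c z hz hc
    apply hz
    funext j
    have := congrFun hc j.succ
    simpa using this
  -- Δt is positive definite
  have hΔtPD : Δt.PosDef := by
    refine Matrix.PosDef.of_dotProduct_mulVec_pos hΔtH fun z hz => ?_
    have h1 := hPD.dotProduct_mulVec_pos (x := Fin.cons 0 z) (hconsne 0 z hz)
    rw [star_trivial, hquad 0 z] at h1
    simpa using h1
  have hΔtdet : IsUnit Δt.det := (Matrix.isUnit_iff_isUnit_det _).mp hΔtPD.isUnit
  have hΔtinv : Δt * Δt⁻¹ = 1 := Matrix.mul_nonsing_inv _ hΔtdet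
  have hΔtiT : Δt⁻¹ᵀ = Δt⁻¹ := by rw [Matrix.transpose_nonsing_inv, hΔtT]
  -- the matrix N
  set N : Matrix (Fin n) (Fin n) ℝ := Δt - A⁻¹ • vecMulVec k1 k1 with hN
  have hNT : Nᵀ = N := by
    rw [hN]
    ext i j
    simp [vecMulVec_apply, hΔtsy j i, mul_comm]
  have hNH : N.IsHermitian := by
    unfold Matrix.IsHermitian
    ext i j
    have := congrFun (congrFun hNT i) j
    simpa [conjTranspose_apply] using this
  have hNquad : ∀ z : Fin n → ℝ, z ⬝ᵥ (N *ᵥ z) = z ⬝ᵥ (Δt *ᵥ z) - A⁻¹ * (k1 ⬝ᵥ z) ^ 2 := by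
    intro z
    rw [hN, Matrix.sub_mulVec, dotProduct_sub, Matrix.smul_mulVec, vvmv,
      dotProduct_smul, dotProduct_smul, dotProduct_comm z k1]
    simp only [smul_eq_mul]
    ring
  have hNPD : N.PosDef := by
    refine Matrix.PosDef.of_dotProduct_mulVec_pos hNH fun z hz => ?_
    have h1 := hPD.dotProduct_mulVec_pos (x := Fin.cons (-(A⁻¹ * (k1 ⬝ᵥ z))) z) (hconsne _ z hz)
    rw [star_trivial, hquad _ z] at h1
    rw [star_trivial, hNquad]
    have hkey : A * (-(A⁻¹ * (k1 ⬝ᵥ z))) ^ 2 + 2 * (-(A⁻¹ * (k1 ⬝ᵥ z))) * (k1 ⬝ᵥ z)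
        = -(A⁻¹ * (k1 ⬝ᵥ z) ^ 2) := by
      field_simp
      ring
    linarith [h1, hkey]
  have hNdet : IsUnit N.det := (Matrix.isUnit_iff_isUnit_det _).mp hNPD.isUnit
  have hFN : F = N⁻¹ := by rw [hF, hN, hA]
  have hNF : N * F = 1 := by rw [hFN]; exact Matrix.mul_nonsing_inv _ hNdet
  have hFT : Fᵀ = F := by rw [hFN, Matrix.transpose_nonsing_inv, hNT]
  -- the Schur complement S is positive
  set u : Fin n → ℝ := Δt⁻¹ *ᵥ k1 with hu
  have hΔtu : Δt *ᵥ u = k1 := by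
    rw [hu, Matrix.mulVec_mulVec, hΔtinv, Matrix.one_mulVec]
  set S : ℝ := A - k1 ⬝ᵥ u with hS
  have hSpos : 0 < S := by
    have h1 := hPD.dotProduct_mulVec_pos (x := Fin.cons 1 (-u)) (by
      intro hc
      have := congrFun hc 0
      simp at this)
    rw [star_trivial, hquad 1 (-u)] at h1
    simp only [dotProduct_neg, Matrix.mulVec_neg, neg_dotProduct, neg_neg,
      hΔtu] at h1
    rw [dotProduct_comm u k1] at h1
    rw [hS]
    nlinarith [h1]
  have hSne : S ≠ 0 := ne_of_gt hSpos
  have hES : E * S = 1 := by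
    rw [hE, hS, hu, hA]
    exact inv_mul_cancel₀ (by rw [hS, hu, hA] at hSne; exact hSne)
  -- key identity : F *ᵥ k1 = (A * E) • u
  have hq : k1 ⬝ᵥ u = A - S := by rw [hS]; ring
  have hcoef : A * E - A * E * (A⁻¹ * (A - S)) = 1 := by
    have h2 : A * E * (A⁻¹ * (A - S)) = E * (A - S) := by
      linear_combination E * (A - S) * hAA
    rw [h2]
    linear_combination hES
  have hNu : N *ᵥ ((A * E) • u) = k1 := by
    rw [Matrix.mulVec_smul, hN, Matrix.sub_mulVec, Matrix.smul_mulVec, vvmv, hΔtu, hq]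
    funext i
    simp only [Pi.smul_apply, Pi.sub_apply, smul_eq_mul]
    linear_combination k1 i * hcoef
  have hFk1 : F *ᵥ k1 = (A * E) • u := by
    have := congrArg (fun v => F *ᵥ v) hNu
    simpa [Matrix.mulVec_mulVec, hFN, Matrix.nonsing_inv_mul _ hNdet,
      Matrix.one_mulVec] using this.symm
  -- vecMul versions via symmetry
  have hk1F : k1 ᵥ* F = (A * E) • u := by
    rw [← hFT, Matrix.vecMul_transpose, hFk1]
  have hk1Δti : k1 ᵥ* Δt⁻¹ = u := by
    rw [← hΔtiT, Matrix.vecMul_transpose, hu]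
  -- notation
  set yt : Fin n → ℝ := fun j => y j.succ with hyt
  set T : ℝ := u ⬝ᵥ yt with hT
  have haval : a = E * y 0 - E * T := by
    rw [ha, hG, hk1Δti]
    simp only [neg_dotProduct, smul_dotProduct, smul_eq_mul]
    rw [← hT]
    ring
  set wt : Fin n → ℝ := y 0 • H + F *ᵥ yt with hwt
  set w : Fin (n+1) → ℝ := Fin.cons a wt with hw
  -- dot products with wt
  have hk1H : k1 ⬝ᵥ H = -(E * (A - S)) := by
    rw [hH, dotProduct_neg, dotProduct_smul, hFk1, dotProduct_smul,
      hq]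
    simp only [smul_eq_mul]
    linear_combination -((A - S) * E) * hAA
  have hk1Fyt : k1 ⬝ᵥ (F *ᵥ yt) = A * E * T := by
    rw [Matrix.dotProduct_mulVec, hk1F, hT, smul_dotProduct]
    simp
  have hΔtH2 : Δt *ᵥ H = -(E • k1) := by
    rw [hH, hFk1, Matrix.mulVec_neg, Matrix.mulVec_smul, Matrix.mulVec_smul, hΔtu,
      smul_smul]
    have : A⁻¹ * (A * E) = E := by
      field_simp
    rw [this]
  have hΔtFyt : Δt *ᵥ (F *ᵥ yt) = yt + (E * T) • k1 := by
    have hsplit : Δt = N + A⁻¹ • vecMulVec k1 k1 := by rw [hN]; abel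
    rw [hsplit, Matrix.add_mulVec, Matrix.mulVec_mulVec, hNF, Matrix.one_mulVec,
      Matrix.smul_mulVec, vvmv, hk1Fyt, smul_smul]
    have : A⁻¹ * (A * E * T) = E * T := by
      field_simp
    rw [this]
  -- the main claim : Δ *ᵥ w = y
  have hΔw : Δ *ᵥ w = y := by
    rw [hw, hmv]
    funext i
    refine Fin.cases ?_ ?_ i
    · rw [Fin.cons_zero, hwt, dotProduct_add, dotProduct_smul, hk1H, hk1Fyt,
        haval]
      simp only [smul_eq_mul]
      linear_combination y 0 * hES
    · intro j
      rw [Fin.cons_succ]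
      have h2 : (Δt *ᵥ wt) j = y 0 * (-(E * k1 j)) + (yt j + E * T * k1 j) := by
        rw [hwt, Matrix.mulVec_add, Matrix.mulVec_smul, hΔtH2, hΔtFyt]
        simp only [Pi.add_apply, Pi.smul_apply, Pi.neg_apply, smul_eq_mul]
      rw [h2, haval]
      show _ = yt j
      ring
  have hΔdet : IsUnit Δ.det := (Matrix.isUnit_iff_isUnit_det _).mp hPD.isUnit
  have hinvy : Δ⁻¹ *ᵥ y = w := by
    rw [← hΔw, Matrix.mulVec_mulVec, Matrix.nonsing_inv_mul _ hΔdet, Matrix.one_mulVec]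
  -- wt - Δt⁻¹ yt = b
  have hbw : ∀ j, wt j = b j + (Δt⁻¹ *ᵥ yt) j := by
    intro j
    rw [hb, hwt]
    have hvm : (yt ᵥ* (F - Δt⁻¹)) = F *ᵥ yt - Δt⁻¹ *ᵥ yt := by
      have h1 : (F - Δt⁻¹)ᵀ = F - Δt⁻¹ := by rw [Matrix.transpose_sub, hFT, hΔtiT]
      rw [← h1, Matrix.vecMul_transpose, Matrix.sub_mulVec]
    simp only [Pi.add_apply, Pi.sub_apply, hvm, Pi.smul_apply, smul_eq_mul]
    ring
  -- final computation
  rw [hμD p, hμDt p, hinvy, hw]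
  simp only [dotProduct, Fin.sum_univ_succ, Fin.cons_zero, Fin.cons_succ]
  rw [add_sub_assoc, ← Finset.sum_sub_distrib, mul_comm]
  congr 1
  refine Finset.sum_congr rfl fun j _ => ?_
  rw [hbw j]
  ring
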